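/- arXiv:2409.01425 — 4 statements merged into one kernel-verified Lean document; each statement's English description precedes it below -/
import Mathlib

section
/- Let G be a finite abstract simplicial complex with vertex set V. If every simplex of G is a subset of some k-dimensional simplex or contains a k-dimensional simplex (i.e., the k-dimensional simplices G_k cover G in the sense that every simplex relates to G_k by inclusion as described), then the k-form curvature K_k(x) = \sum_{y \subseteq x, y \in G} \omega(y)/d_k(y) + \sum_{j > k} (-1)^j d_j(x)/\binom{j+1}{k+1}, where \omega(y) = (-1)^{dim(y)}, d_k(y) is the number of k-dimensional simplices containing y, and d_j(x) is the number of j-dimensional simplices containing x, satisfies Gauss-Bonnet: \sum_{x \in G_k} K_k(x) = \chi(G) = \sum_{x \in G} (-1)^{dim(x)}. -/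
/-- `G` is a finite abstract simplicial complex: a finite collection of nonempty
finite sets closed under taking nonempty subsets. -/
def IsSimplicialComplex {α : Type*} [DecidableEq α] (G : Finset (Finset α)) : Prop :=
  (∀ x ∈ G, x.Nonempty) ∧ ∀ x ∈ G, ∀ y : Finset α, y ⊆ x → y.Nonempty → y ∈ G

/-- Gauss-Bonnet for the k-form curvature `K_k` supported on the `k`-dimensional
simplices `G_k`, assuming `G_k` covers `G`. -/
theorem gauss_bonnet_k_form_curvature {α : Type*} [DecidableEq α]
    (G : Finset (Finset α)) (hG : IsSimplicialComplex G) (k : ℕ)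
    (Gk : Finset (Finset α)) (hGk : Gk = G.filter fun x => x.card = k + 1)
    -- degree functions: `d j y` is the number of `j`-dimensional simplices containing `y`
    (d : ℕ → Finset α → ℕ)
    (hd : ∀ j y, d j y = ((G.filter fun z => z.card = j + 1 ∧ y ⊆ z)).card)
    -- covering hypothesis: every simplex of dimension at most `k` is contained
    -- in a `k`-dimensional simplex
    (hcover : ∀ y ∈ G, y.card ≤ k + 1 → 0 < d k y)
    -- the k-form curvature
    (K : Finset α → ℚ)
    (hK : ∀ x, K x =
      (∑ y ∈ G.filter fun y => y ⊆ x, ((-1 : ℚ) ^ (y.card - 1)) / (d k y)) +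
      ∑ j ∈ Finset.Ioc k (G.sup Finset.card),
        ((-1 : ℚ) ^ j) * (d j x) / (Nat.choose (j + 1) (k + 1))) :
    ∑ x ∈ Gk, K x = ∑ x ∈ G, ((-1 : ℚ) ^ (x.card - 1)) := by
  classical
  simp only [hK]
  rw [Finset.sum_add_distrib]
  set M := G.sup Finset.card with hMdef
  have hGkmem : ∀ x, x ∈ Gk ↔ x ∈ G ∧ x.card = k + 1 := by
    intro x; rw [hGk, Finset.mem_filter]
  -- Part A
  have hA : (∑ x ∈ Gk, ∑ y ∈ G.filter (fun y => y ⊆ x), ((-1:ℚ)^(y.card-1))/(d k y))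
      = ∑ y ∈ G.filter (fun y => y.card ≤ k+1), (-1:ℚ)^(y.card-1) := by
    rw [Finset.sum_comm' (t' := G) (s' := fun y => Gk.filter (fun x => y ⊆ x))
        (fun x y => by simp only [Finset.mem_filter]; tauto)]
    rw [Finset.sum_filter]
    refine Finset.sum_congr rfl fun y hy => ?_
    have hcardy : (Gk.filter (fun x => y ⊆ x)).card = d k y := by
      rw [hGk, Finset.filter_filter, hd]
    rw [Finset.sum_const, hcardy, nsmul_eq_mul]
    by_cases h : y.card ≤ k+1
    · rw [if_pos h, mul_comm, div_mul_cancel₀]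
      exact Nat.cast_ne_zero.mpr (hcover y hy h).ne'
    · rw [if_neg h]
      have hz : d k y = 0 := by
        rw [hd, Finset.card_eq_zero, Finset.filter_eq_empty_iff]
        rintro z hzG ⟨h1, h2⟩
        exact h (h1 ▸ Finset.card_le_card h2)
      rw [hz]; simp
  -- Part B
  have hB : (∑ x ∈ Gk, ∑ j ∈ Finset.Ioc k M, ((-1:ℚ)^j) * (d j x) / (Nat.choose (j+1) (k+1)))
      = ∑ y ∈ G.filter (fun y => ¬ y.card ≤ k+1), (-1:ℚ)^(y.card-1) := by
    rw [Finset.sum_comm]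
    have step1 : ∀ j ∈ Finset.Ioc k M,
        (∑ x ∈ Gk, ((-1:ℚ)^j) * (d j x) / (Nat.choose (j+1) (k+1)))
        = ((G.filter (fun z => z.card = j+1)).card : ℚ) * (-1:ℚ)^j := by
      intro j hj
      have hjk := (Finset.mem_Ioc.mp hj).1
      have hswap : (∑ x ∈ Gk, d j x)
          = ∑ z ∈ G.filter (fun z => z.card = j+1), (Gk.filter (fun x => x ⊆ z)).card := by
        simp only [hd, Finset.card_filter]
        rw [Finset.sum_comm, Finset.sum_filter]
        refine Finset.sum_congr rfl fun z _ => ?_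
        by_cases h : z.card = j + 1 <;> simp [h]
      have hcnt : ∀ z ∈ G.filter (fun z => z.card = j+1),
          (Gk.filter (fun x => x ⊆ z)).card = Nat.choose (j+1) (k+1) := by
        intro z hz
        rw [Finset.mem_filter] at hz
        have heq : Gk.filter (fun x => x ⊆ z) = z.powersetCard (k+1) := by
          ext x
          simp only [Finset.mem_filter, Finset.mem_powersetCard, hGkmem]
          constructor
          · rintro ⟨⟨_, hc⟩, hs⟩; exact ⟨hs, hc⟩
          · rintro ⟨hs, hc⟩
            refine ⟨⟨hG.2 z hz.1 x hs ?_, hc⟩, hs⟩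
            rw [← Finset.card_pos, hc]; omega
        rw [heq, Finset.card_powersetCard, hz.2]
      have hsum : (∑ x ∈ Gk, ((d j x : ℚ)))
          = ((G.filter (fun z => z.card = j+1)).card : ℚ) * (Nat.choose (j+1) (k+1)) := by
        have h2 := congrArg (Nat.cast : ℕ → ℚ) hswap
        push_cast at h2
        rw [h2, Finset.sum_congr rfl (fun z hz => by rw [hcnt z hz]),
          Finset.sum_const, nsmul_eq_mul]
      have hC : ((Nat.choose (j+1) (k+1) : ℚ)) ≠ 0 :=
        Nat.cast_ne_zero.mpr (Nat.choose_pos (by omega)).ne'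
      have hfac : ∑ x ∈ Gk, ((-1:ℚ)^j) * (d j x) / (Nat.choose (j+1) (k+1))
          = ((-1:ℚ)^j) * (∑ x ∈ Gk, ((d j x : ℚ))) / (Nat.choose (j+1) (k+1)) := by
        rw [Finset.mul_sum, Finset.sum_div]
      rw [hfac, hsum]
      field_simp
    rw [Finset.sum_congr rfl step1]
    have hmaps : ∀ z ∈ G.filter (fun y => ¬ y.card ≤ k+1),
        z.card - 1 ∈ Finset.Ioc k M := by
      intro z hz
      rw [Finset.mem_filter] at hz
      have : z.card ≤ M := Finset.le_sup hz.1
      rw [Finset.mem_Ioc]; omega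
    rw [← Finset.sum_fiberwise_of_maps_to hmaps]
    refine Finset.sum_congr rfl fun j hj => ?_
    have hjk := (Finset.mem_Ioc.mp hj).1
    have hfe : (G.filter (fun y => ¬ y.card ≤ k+1)).filter (fun z => z.card - 1 = j)
        = G.filter (fun z => z.card = j+1) := by
      rw [Finset.filter_filter]
      apply Finset.filter_congr
      intro z hz
      constructor
      · rintro ⟨h1, h2⟩; omega
      · intro h1; omega
    rw [hfe]
    rw [show (∑ z ∈ G.filter (fun z => z.card = j+1), ((-1:ℚ))^(z.card-1))
        = ∑ _z ∈ G.filter (fun z => z.card = j+1), ((-1:ℚ))^j from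
      Finset.sum_congr rfl fun z hz => by
        rw [(Finset.mem_filter.mp hz).2, Nat.add_sub_cancel]]
    rw [Finset.sum_const, nsmul_eq_mul]
  rw [hA, hB]
  exact Finset.sum_filter_add_sum_filter_not G _ _
end

section
/- Let G be a finite abstract simplicial complex with vertex set V = \bigcup_{x \in G} x. The Levitt curvature K(v) = \sum_{x \in G, v \in x} (-1)^{dim(x)}/|x| satisfies Gauss-Bonnet: \sum_{v \in V} K(v) = \chi(G). -/
/-- Gauss-Bonnet for the Levitt curvature `K(v) = ∑_{x ∋ v} (-1)^{dim x}/|x|`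
on the vertex set `V = ⋃_{x ∈ G} x`. -/
theorem gauss_bonnet_levitt {α : Type*} [DecidableEq α]
    (G : Finset (Finset α)) (hG : IsSimplicialComplex G)
    (V : Finset α) (hV : V = G.biUnion id)
    (K : α → ℚ)
    (hK : ∀ v, K v = ∑ x ∈ G.filter fun x => v ∈ x, ((-1 : ℚ) ^ (x.card - 1)) / x.card) :
    ∑ v ∈ V, K v = ∑ x ∈ G, ((-1 : ℚ) ^ (x.card - 1)) := by
  simp only [hK]
  rw [Finset.sum_comm' (s' := fun x => x) (t' := G)
    (f := fun v x => ((-1 : ℚ) ^ (x.card - 1)) / x.card)]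
  · refine Finset.sum_congr rfl fun x hx => ?_
    rw [Finset.sum_const, nsmul_eq_mul]
    have hc : (x.card : ℚ) ≠ 0 := by
      exact_mod_cast Finset.card_ne_zero_of_mem ((hG.1 x hx).choose_spec)
    field_simp
  · intro v x
    simp only [Finset.mem_filter, hV, Finset.mem_biUnion, id]
    constructor
    · rintro ⟨_, hxG, hvx⟩; exact ⟨hvx, hxG⟩
    · rintro ⟨hvx, hxG⟩; exact ⟨⟨x, hxG, hvx⟩, hxG, hvx⟩
end

section
/- Let G be a finite abstract simplicial complex. For each vertex v let d_j(v) be the number of j-dimensional simplices of G containing v. Then the Levitt curvature K(v) = \sum_{j \ge 0} (-1)^j d_j(v)/(j+1) satisfies \sum_{v \in V} K(v) = \chi(G). -/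
/-- Gauss-Bonnet for the Levitt curvature written via the simplex degrees
`d_j(v) = #{x ∈ G : v ∈ x, |x| = j+1}`:  `K(v) = ∑_j (-1)^j d_j(v)/(j+1)`. -/
theorem gauss_bonnet_levitt_degrees {α : Type*} [DecidableEq α]
    (G : Finset (Finset α)) (hG : IsSimplicialComplex G)
    (V : Finset α) (hV : V = G.biUnion id)
    (d : ℕ → α → ℕ)
    (hd : ∀ j v, d j v = ((G.filter fun x => v ∈ x ∧ x.card = j + 1)).card)
    (K : α → ℚ)
    (hK : ∀ v, K v = ∑ j ∈ Finset.range (G.sup Finset.card),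
      ((-1 : ℚ) ^ j) * (d j v) / (j + 1)) :
    ∑ v ∈ V, K v = ∑ x ∈ G, ((-1 : ℚ) ^ (x.card - 1)) := by
  have key : ∀ v, K v = ∑ x ∈ G,
      (if v ∈ x then ((-1 : ℚ) ^ (x.card - 1)) / x.card else 0) := by
    intro v
    rw [hK]
    have hdq : ∀ j, ((d j v : ℚ)) =
        ∑ x ∈ G, (if v ∈ x ∧ x.card = j + 1 then (1 : ℚ) else 0) := by
      intro j
      rw [hd]
      simp [Finset.sum_boole]
    calc ∑ j ∈ Finset.range (G.sup Finset.card), ((-1 : ℚ) ^ j) * (d j v) / (j + 1)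
        = ∑ j ∈ Finset.range (G.sup Finset.card), ∑ x ∈ G,
            (if v ∈ x ∧ x.card = j + 1 then ((-1 : ℚ) ^ j) / (j + 1) else 0) := by
          refine Finset.sum_congr rfl fun j _ => ?_
          rw [hdq j, div_eq_mul_inv, mul_right_comm, Finset.mul_sum]
          refine Finset.sum_congr rfl fun x _ => ?_
          split <;> simp [div_eq_mul_inv]
      _ = ∑ x ∈ G, ∑ j ∈ Finset.range (G.sup Finset.card),
            (if v ∈ x ∧ x.card = j + 1 then ((-1 : ℚ) ^ j) / (j + 1) else 0) :=
          Finset.sum_comm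
      _ = ∑ x ∈ G, (if v ∈ x then ((-1 : ℚ) ^ (x.card - 1)) / x.card else 0) := by
          refine Finset.sum_congr rfl fun x hx => ?_
          by_cases hv : v ∈ x
          · have hpos : 0 < x.card := Finset.card_pos.mpr (hG.1 x hx)
            have hmem : x.card - 1 ∈ Finset.range (G.sup Finset.card) := by
              have hle : x.card ≤ G.sup Finset.card := Finset.le_sup hx
              simp only [Finset.mem_range]
              omega
            rw [Finset.sum_eq_single (x.card - 1)]
            · have h1 : x.card - 1 + 1 = x.card := by omega
              rw [if_pos ⟨hv, h1.symm⟩, if_pos hv,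
                Nat.cast_sub (by omega : 1 ≤ x.card)]
              push_cast
              ring
            · intro j _ hj
              rw [if_neg]
              rintro ⟨-, hc⟩
              omega
            · intro h; exact absurd hmem h
          · simp [hv]
  simp only [key]
  rw [Finset.sum_comm]
  refine Finset.sum_congr rfl fun x hx => ?_
  have hsub : x ⊆ V := by
    subst hV; intro v hv; exact Finset.mem_biUnion.mpr ⟨x, hx, hv⟩
  rw [Finset.sum_ite_mem, Finset.inter_eq_right.mpr hsub, Finset.sum_const, nsmul_eq_mul]
  have hpos : 0 < x.card := Finset.card_pos.mpr (hG.1 x hx)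
  field_simp
end

section
/- Let L be a symmetric positive semidefinite real n\times n matrix with a sign grading \omega: {1,...,n} \to {-1,+1} such that the supertrace str(L^m) = 0 for all m \ge 1. Then str(e^{-tL}) = str(I) for all t \ge 0, and the limit as t \to \infty of str(e^{-tL}) equals \sum_i \omega(i) P_{ii} where P is the orthogonal projection onto ker(L). Consequently str(I) = str(P) (the Euler-Poincaré formula: Euler characteristic equals alternating sum of dimensions of harmonic spaces). -/
open scoped Matrix

set_option maxHeartbeats 1000000 in
/-- McKean-Singer / Euler-Poincaré: for a symmetric positive semidefinite matrix
`L` with grading `ω` whose powers have vanishing supertrace, the supertrace of the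
heat kernel `e^{-tL}` is constant in `t ≥ 0`, converges as `t → ∞` to the
supertrace of the orthogonal projection `P` onto `ker L`, and hence
`str(I) = str(P)` (Euler characteristic equals the alternating sum of the
dimensions of the harmonic spaces). -/
theorem mckean_singer_euler_poincare {n : ℕ}
    (L : Matrix (Fin n) (Fin n) ℝ) (hL : L.PosSemidef)
    (ω : Fin n → ℝ) (hω : ∀ i, ω i = 1 ∨ ω i = -1)
    (str : Matrix (Fin n) (Fin n) ℝ → ℝ)
    (hstr : ∀ A, str A = ∑ i, ω i * A i i)
    (hMS : ∀ m : ℕ, 1 ≤ m → str (L ^ m) = 0)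
    (P : Matrix (Fin n) (Fin n) ℝ)
    -- `P` is the orthogonal projection onto `ker L`:
    (hPsymm : P.IsSymm) (hPidem : P * P = P)
    (hPker : L * P = 0)
    (hPfix : ∀ x : Fin n → ℝ, L.mulVec x = 0 → P.mulVec x = x) :
    (∀ t : ℝ, 0 ≤ t → str (NormedSpace.exp ((-t) • L)) = str 1) ∧
    Filter.Tendsto (fun t : ℝ => str (NormedSpace.exp ((-t) • L)))
      Filter.atTop (nhds (str P)) ∧
    str 1 = str P := by
  classical
  have hH : L.IsHermitian := hL.isHermitian
  -- Part 1 : constancy of the supertrace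
  have key1 : ∀ t : ℝ, str (NormedSpace.exp ((-t) • L)) = str 1 := by
    intro t
    have φlin : IsLinearMap ℝ (fun A : Matrix (Fin n) (Fin n) ℝ => ∑ i, ω i * A i i) := by
      constructor
      · intro A B; simp [mul_add, Finset.sum_add_distrib]
      · intro c A; simp [Finset.mul_sum, mul_left_comm]
    let φ : Matrix (Fin n) (Fin n) ℝ →ₗ[ℝ] ℝ := φlin.mk' _
    let φc : Matrix (Fin n) (Fin n) ℝ →L[ℝ] ℝ := LinearMap.toContinuousLinearMap φ
    have hφ : ∀ A, str A = φc A := fun A => hstr A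
    letI : NormedRing (Matrix (Fin n) (Fin n) ℝ) := Matrix.linftyOpNormedRing
    letI : NormedAlgebra ℝ (Matrix (Fin n) (Fin n) ℝ) := Matrix.linftyOpNormedAlgebra
    have hsum : Summable (fun k : ℕ => ((Nat.factorial k : ℝ)⁻¹) • ((-t) • L) ^ k) :=
      NormedSpace.expSeries_summable' _
    rw [hφ, NormedSpace.exp_eq_tsum (𝕂 := ℝ), φc.map_tsum hsum]
    rw [tsum_eq_single 0]
    · simp [hφ 1]
    · intro k hk
      have h1 : 1 ≤ k := Nat.one_le_iff_ne_zero.mpr hk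
      have h0 : φc (L ^ k) = 0 := by rw [← hφ]; exact hMS k h1
      rw [smul_pow, map_smul, map_smul, h0, smul_zero, smul_zero]
  -- Spectral decomposition
  set U : Matrix (Fin n) (Fin n) ℝ := (hH.eigenvectorUnitary : Matrix (Fin n) (Fin n) ℝ) with hUdef
  set V : Matrix (Fin n) (Fin n) ℝ := star U with hVdef
  have hVU : V * U = 1 := hH.eigenvectorUnitary.2.1
  have hUV : U * V = 1 := hH.eigenvectorUnitary.2.2
  set lam : Fin n → ℝ := hH.eigenvalues with hlamdef
  have hlam0 : ∀ i, 0 ≤ lam i := hL.eigenvalues_nonneg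
  have hspec : L = U * Matrix.diagonal lam * V := by
    have h := hH.spectral_theorem
    simpa using h
  have hexp : ∀ t : ℝ, NormedSpace.exp ((-t) • L)
      = U * Matrix.diagonal (fun k => Real.exp (-t * lam k)) * V := by
    intro t
    have hUnit : IsUnit U := (Matrix.isUnit_iff_isUnit_det U).mpr
      (IsUnit.of_mul_eq_one (V.det) (by rw [← Matrix.det_mul, hUV, Matrix.det_one]))
    have hUinv : U⁻¹ = V := Matrix.inv_eq_right_inv hUV
    have h1 : (-t) • L = U * Matrix.diagonal (fun k => -t * lam k) * U⁻¹ := by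
      rw [hUinv, hspec, show (fun k => -t * lam k) = (-t) • lam from rfl,
        Matrix.diagonal_smul, mul_smul_comm, smul_mul_assoc]
    rw [h1, Matrix.exp_conj U _ hUnit, hUinv, Matrix.exp_diagonal]
    congr 1
    rw [Pi.exp_def]
    funext k
    simp [← Real.exp_eq_exp_ℝ]
  -- the candidate limit projection
  set ind : Fin n → ℝ := fun k => if lam k = 0 then 1 else 0 with hinddef
  set Q : Matrix (Fin n) (Fin n) ℝ := U * Matrix.diagonal ind * V with hQdef
  -- entry formula
  have hentry : ∀ (dg : Fin n → ℝ) (i j : Fin n),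
      (U * Matrix.diagonal dg * V) i j = ∑ k, U i k * dg k * V k j := by
    intro dg i j
    rw [Matrix.mul_apply]
    refine Finset.sum_congr rfl fun k _ => ?_
    rw [Matrix.mul_diagonal]
  -- L * Q = 0
  have hLQ : L * Q = 0 := by
    rw [hspec, hQdef]
    have h3 : U * Matrix.diagonal lam * V * (U * Matrix.diagonal ind * V)
        = U * (Matrix.diagonal lam * Matrix.diagonal ind) * V := by
      rw [show U * Matrix.diagonal lam * V * (U * Matrix.diagonal ind * V)
          = U * Matrix.diagonal lam * (V * U) * Matrix.diagonal ind * V by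
        noncomm_ring, hVU, mul_one, mul_assoc, mul_assoc, mul_assoc, mul_assoc]
    rw [h3, Matrix.diagonal_mul_diagonal]
    have hz : (fun k => lam k * ind k) = (fun _ => (0:ℝ)) := by
      funext k
      by_cases h : lam k = 0 <;> simp [hinddef, h]
    rw [hz, Matrix.diagonal_zero, mul_zero, zero_mul]
  -- Q * P = P
  have hQPP : Q * P = P := by
    have h1 : Matrix.diagonal lam * (V * P) = 0 := by
      have hk := hPker
      rw [hspec] at hk
      calc Matrix.diagonal lam * (V * P) = V * (U * (Matrix.diagonal lam * (V * P))) := by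
            rw [← mul_assoc, ← mul_assoc, hVU, one_mul]
          _ = V * (U * Matrix.diagonal lam * V * P) := by noncomm_ring
          _ = 0 := by rw [hk, mul_zero]
    have h2 : Matrix.diagonal ind * (V * P) = V * P := by
      ext k j
      have h1kj : lam k * (V * P) k j = 0 := by
        have := congrFun (congrFun h1 k) j
        simpa [Matrix.diagonal_mul] using this
      rw [Matrix.diagonal_mul]
      by_cases h : lam k = 0
      · simp [hinddef, h]
      · rcases mul_eq_zero.mp h1kj with h' | h'
        · exact absurd h' h
        · simp [hinddef, h, h']
    calc Q * P = U * (Matrix.diagonal ind * (V * P)) := by rw [hQdef]; noncomm_ring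
      _ = U * (V * P) := by rw [h2]
      _ = P := by rw [← mul_assoc, hUV, one_mul]
  -- P * Q = Q
  have hPQQ : P * Q = Q := by
    ext i j
    have hcol : L.mulVec (fun k => Q k j) = 0 := by
      funext i'
      have := congrFun (congrFun hLQ i') j
      simpa [Matrix.mul_apply, Matrix.mulVec, dotProduct] using this
    have := congrFun (hPfix _ hcol) i
    simpa [Matrix.mul_apply, Matrix.mulVec, dotProduct] using this
  -- Q is symmetric
  have hQsymm : Q.transpose = Q := by
    have hVT : V.transpose = U := by
      rw [hVdef]
      ext i j
      simp [Matrix.transpose_apply, Matrix.star_apply]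
    have hUT : U.transpose = V := by
      rw [← hVT, Matrix.transpose_transpose]
    rw [hQdef, Matrix.transpose_mul, Matrix.transpose_mul, Matrix.diagonal_transpose,
      hVT, hUT, mul_assoc]
  -- Q = P
  have hQP : Q = P := by
    have hPT : P.transpose = Q := by
      rw [show P = Q * P from hQPP.symm, Matrix.transpose_mul, hPsymm, hQsymm, hPQQ]
    rw [← hPT, hPsymm]
  -- the limit
  have htend : Filter.Tendsto (fun t : ℝ => str (NormedSpace.exp ((-t) • L)))
      Filter.atTop (nhds (str P)) := by
    have hform : (fun t : ℝ => str (NormedSpace.exp ((-t) • L)))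
        = fun t : ℝ => ∑ i, ω i * ∑ k, U i k * Real.exp (-t * lam k) * V k i := by
      funext t
      rw [hstr, hexp t]
      exact Finset.sum_congr rfl fun i _ => by rw [hentry]
    have hPval : str P = ∑ i, ω i * ∑ k, U i k * ind k * V k i := by
      rw [← hQP, hstr]
      exact Finset.sum_congr rfl fun i _ => by rw [hQdef, hentry]
    rw [hform, hPval]
    apply tendsto_finset_sum
    intro i _
    apply Filter.Tendsto.const_mul
    apply tendsto_finset_sum
    intro k _
    by_cases h : lam k = 0
    · have : (fun t : ℝ => U i k * Real.exp (-t * lam k) * V k i)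
          = fun _ : ℝ => U i k * ind k * V k i := by
        funext t; simp [h, hinddef]
      rw [this]
      exact tendsto_const_nhds
    · have hpos : 0 < lam k := lt_of_le_of_ne (hlam0 k) (Ne.symm h)
      have hexp0 : Filter.Tendsto (fun t : ℝ => Real.exp (-t * lam k))
          Filter.atTop (nhds 0) := by
        apply Real.tendsto_exp_atBot.comp
        exact Filter.tendsto_neg_atTop_atBot.atBot_mul_const hpos
      have : U i k * ind k * V k i = U i k * 0 * V k i := by simp [hinddef, h]
      rw [this]
      exact (hexp0.const_mul _).mul_const _
  refine ⟨fun t _ => key1 t, htend, ?_⟩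
  have hconst : Filter.Tendsto (fun t : ℝ => str (NormedSpace.exp ((-t) • L)))
      Filter.atTop (nhds (str 1)) := by
    have : (fun t : ℝ => str (NormedSpace.exp ((-t) • L))) = fun _ => str 1 :=
      funext key1
    rw [this]; exact tendsto_const_nhds
  exact tendsto_nhds_unique hconst htend
end
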